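/- The clique number of the Johnson graph J(N,k) satisfies ω(J(N,k)) = max(N − k + 1, k + 1) for N > 2, 0 < k < N. -/

import Mathlib

open Finset


/-- The Johnson graph `J(N, k)`. -/
def johnson (N k : ℕ) : SimpleGraph {S : Finset (Fin N) // S.card = k} where
  Adj S T := S ≠ T ∧ (S.1 ∩ T.1).card = k - 1
  symm := by
    constructor
    intro S T h
    exact ⟨h.1.symm, by rw [Finset.inter_comm]; exact h.2⟩
  loopless := by
    constructor
    intro S h
    exact h.1 rfl

/-- The clique number of a graph: the largest size of a clique. -/
noncomputable def omega {V : Type*} (G : SimpleGraph V) : ℕ :=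
  sSup {n | ∃ C : Finset V, G.IsNClique n C}


lemma keyL {α : Type*} [DecidableEq α] {k : ℕ} (hk : 0 < k) {A B C : Finset α}
    (hC : C.card = k) (hAB : (A ∩ B).card = k - 1)
    (hAC : (A ∩ C).card = k - 1) (hBC : (B ∩ C).card = k - 1) :
    A ∩ B ⊆ C ∨ C ⊆ A ∪ B := by
  by_cases h : A ∩ B ⊆ C
  · exact Or.inl h
  right
  have h1 : (A ∩ B ∩ C).card < k - 1 := by
    rw [← hAB]
    apply card_lt_card
    refine ⟨inter_subset_left, fun hcon => h ?_⟩
    intro x hx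
    exact mem_of_mem_inter_right (hcon hx)
  have h2 : ((C ∩ A) ∩ (C ∩ B)).card + ((C ∩ A) ∪ (C ∩ B)).card
      = (C ∩ A).card + (C ∩ B).card := card_inter_add_card_union _ _
  have e1 : (C ∩ A) ∩ (C ∩ B) = A ∩ B ∩ C := by
    ext x; simp only [mem_inter]; tauto
  have e2 : (C ∩ A) ∪ (C ∩ B) = C ∩ (A ∪ B) := by
    ext x; simp only [mem_inter, mem_union]; tauto
  rw [e1, e2, inter_comm C A, hAC, inter_comm C B, hBC] at h2
  have h3 : (C ∩ (A ∪ B)).card ≤ k := by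
    rw [← hC]; exact card_le_card inter_subset_left
  have h4 : (C ∩ (A ∪ B)).card = k := by omega
  have h5 : C ∩ (A ∪ B) = C :=
    eq_of_subset_of_card_le inter_subset_left (by omega)
  rw [← h5]
  exact inter_subset_right

lemma insert_inter_insert {α : Type*} [DecidableEq α] {S : Finset α} {x y : α}
    (hx : x ∉ S) (hy : y ∉ S) (hxy : x ≠ y) : insert x S ∩ insert y S = S := by
  ext a
  simp only [mem_inter, mem_insert]
  constructor
  · rintro ⟨rfl | h1, h2⟩
    · rcases h2 with rfl | h2
      · exact absurd rfl hxy
      · exact absurd h2 hx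
    · exact h1
  · intro ha
    exact ⟨Or.inr ha, Or.inr ha⟩

lemma cliqueA (N k : ℕ) (hk : 0 < k) (hkN : k < N) :
    ∃ C : Finset {S : Finset (Fin N) // S.card = k},
      (johnson N k).IsNClique (N - k + 1) C := by
  obtain ⟨S, -, hS⟩ := Finset.exists_subset_card_eq (s := (Finset.univ : Finset (Fin N))) (n := k - 1)
    (by rw [card_univ, Fintype.card_fin]; omega)
  have hcardins : ∀ x : {a // a ∈ Sᶜ}, (insert x.1 S).card = k := by
    intro x
    rw [card_insert_of_notMem (mem_compl.mp x.2), hS]; omega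
  refine ⟨Sᶜ.attach.image (fun x => ⟨insert x.1 S, hcardins x⟩), ?_, ?_⟩
  · intro a ha b hb hne
    rw [Finset.mem_coe, Finset.mem_image] at ha hb
    obtain ⟨x, -, rfl⟩ := ha
    obtain ⟨y, -, rfl⟩ := hb
    have hxy : x.1 ≠ y.1 := by
      intro e
      exact hne (Subtype.ext (by simp only [e]))
    refine ⟨hne, ?_⟩
    simp only
    rw [insert_inter_insert (mem_compl.mp x.2) (mem_compl.mp y.2) hxy, hS]
  · have hinj : Function.Injective
        (fun x : {a // a ∈ Sᶜ} => (⟨insert x.1 S, hcardins x⟩ : {T : Finset (Fin N) // T.card = k})) := by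
      intro x y hxy
      have he : insert x.1 S = insert y.1 S := congrArg Subtype.val hxy
      have : x.1 ∈ insert y.1 S := by rw [← he]; exact mem_insert_self _ _
      rcases mem_insert.mp this with h | h
      · exact Subtype.ext h
      · exact absurd h (mem_compl.mp x.2)
    rw [card_image_of_injective _ hinj, card_attach, card_compl, hS, Fintype.card_fin]
    omega

lemma cliqueB (N k : ℕ) (hk : 0 < k) (hkN : k < N) :
    ∃ C : Finset {S : Finset (Fin N) // S.card = k},
      (johnson N k).IsNClique (k + 1) C := by
  obtain ⟨T, -, hT⟩ := Finset.exists_subset_card_eq (s := (Finset.univ : Finset (Fin N))) (n := k + 1)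
    (by rw [card_univ, Fintype.card_fin]; omega)
  have hcarde : ∀ x : {a // a ∈ T}, (T.erase x.1).card = k := by
    intro x
    rw [card_erase_of_mem x.2, hT]; omega
  refine ⟨T.attach.image (fun x => ⟨T.erase x.1, hcarde x⟩), ?_, ?_⟩
  · intro a ha b hb hne
    rw [Finset.mem_coe, Finset.mem_image] at ha hb
    obtain ⟨x, -, rfl⟩ := ha
    obtain ⟨y, -, rfl⟩ := hb
    have hxy : x.1 ≠ y.1 := by
      intro e
      exact hne (Subtype.ext (by simp only [e]))
    refine ⟨hne, ?_⟩
    simp only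
    have he : T.erase x.1 ∩ T.erase y.1 = (T.erase y.1).erase x.1 := by
      ext a
      simp only [mem_inter, mem_erase]
      tauto
    rw [he, card_erase_of_mem (mem_erase.mpr ⟨hxy, x.2⟩), card_erase_of_mem y.2, hT]
    omega
  · have hinj : Function.Injective
        (fun x : {a // a ∈ T} => (⟨T.erase x.1, hcarde x⟩ : {S : Finset (Fin N) // S.card = k})) := by
      intro x y hxy
      have he : T.erase x.1 = T.erase y.1 := congrArg Subtype.val hxy
      by_contra hne
      have hxyne : x.1 ≠ y.1 := fun e => hne (Subtype.ext e)
      have : x.1 ∈ T.erase y.1 := mem_erase.mpr ⟨hxyne, x.2⟩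
      rw [← he] at this
      exact (mem_erase.mp this).1 rfl
    rw [card_image_of_injective _ hinj, card_attach, hT]

lemma clique_le (N k n : ℕ) (hk : 0 < k) (hkN : k < N)
    (C : Finset {S : Finset (Fin N) // S.card = k})
    (h : (johnson N k).IsNClique n C) : n ≤ max (N - k + 1) (k + 1) := by
  have hcard := h.2
  by_cases hn : n ≤ 2
  · exact le_trans (by omega : n ≤ k + 1) (le_max_right _ _)
  push_neg at hn
  obtain ⟨A, hA, B, hB, hABne⟩ := Finset.one_lt_card.mp
    (by omega : 1 < C.card)
  have hadjAB : (johnson N k).Adj A B := h.1 hA hB hABne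
  set S := A.1 ∩ B.1 with hSdef
  have hS : S.card = k - 1 := hadjAB.2
  by_cases hall : ∀ D ∈ C, S ⊆ D.1
  · -- all vertices contain S : clique of type A, size ≤ N - k + 1
    have hle : C.card ≤ (Sᶜ.image (fun x => insert x S)).card := by
      apply Finset.card_le_card_of_injOn (fun D => D.1)
      · intro D hD
        have hL := hall D hD
        have hc1 : (D.1 \ S).card = 1 := by
          rw [card_sdiff_of_subset hL, D.2, hS]; omega
        obtain ⟨x, hx⟩ := card_eq_one.mp hc1
        have hDeq : D.1 = insert x S := by
          rw [insert_eq, ← hx]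
          exact (sdiff_union_of_subset hL).symm
        have hxS : x ∉ S := by
          have : x ∈ D.1 \ S := by rw [hx]; exact mem_singleton_self x
          exact (mem_sdiff.mp this).2
        exact mem_image.mpr ⟨x, mem_compl.mpr hxS, hDeq.symm⟩
      · exact fun a _ b _ hab => Subtype.ext hab
    have h2 : (Sᶜ.image (fun x => insert x S)).card ≤ Sᶜ.card := card_image_le
    have h3 : (Sᶜ : Finset (Fin N)).card = N - (k - 1) := by
      rw [card_compl, hS, Fintype.card_fin]
    refine le_trans ?_ (le_max_left _ _)
    omega
  · -- some vertex does not contain S : clique of type B, size ≤ k + 1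
    push_neg at hall
    obtain ⟨C0, hC0mem, hC0⟩ := hall
    have hC0A : C0 ≠ A := by rintro rfl; exact hC0 inter_subset_left
    have hC0B : C0 ≠ B := by rintro rfl; exact hC0 inter_subset_right
    have hadjA := (h.1 hA hC0mem (Ne.symm hC0A)).2
    have hadjB := (h.1 hB hC0mem (Ne.symm hC0B)).2
    have hC0sub : C0.1 ⊆ A.1 ∪ B.1 :=
      (keyL hk C0.2 hS hadjA hadjB).resolve_left hC0
    have hUcard : (A.1 ∪ B.1).card = k + 1 := by
      have := card_inter_add_card_union A.1 B.1
      rw [A.2, B.2, ← hSdef, hS] at this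
      omega
    have hallsub : ∀ D ∈ C, D.1 ⊆ A.1 ∪ B.1 := by
      intro D hD
      by_cases hDC0 : D = C0
      · rw [hDC0]; exact hC0sub
      by_cases hDA : D = A
      · rw [hDA]; exact subset_union_left
      by_cases hDB : D = B
      · rw [hDB]; exact subset_union_right
      have h1 := (h.1 hA hD (Ne.symm hDA)).2
      have h2 := (h.1 hB hD (Ne.symm hDB)).2
      rcases keyL hk D.2 hS h1 h2 with hL | hR
      · have hc1 : (D.1 \ S).card = 1 := by
          rw [card_sdiff_of_subset hL, D.2, hS]; omega
        obtain ⟨x, hx⟩ := card_eq_one.mp hc1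
        have hDeq : D.1 = insert x S := by
          rw [insert_eq, ← hx]
          exact (sdiff_union_of_subset hL).symm
        have hadjDC0 := (h.1 hD hC0mem hDC0).2
        have hxC0 : x ∈ C0.1 := by
          by_contra hxn
          have hsub2 : D.1 ∩ C0.1 ⊆ S ∩ C0.1 := by
            intro a ha
            rw [mem_inter] at ha ⊢
            rcases ha with ⟨haD, haC0⟩
            rw [hDeq, mem_insert] at haD
            rcases haD with rfl | haS
            · exact absurd haC0 hxn
            · exact ⟨haS, haC0⟩
          have hlt : (S ∩ C0.1).card < k - 1 := by
            rw [← hS]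
            exact card_lt_card ⟨inter_subset_left,
              fun hcon => hC0 (fun y hy => mem_of_mem_inter_right (hcon hy))⟩
          have := card_le_card hsub2
          omega
        rw [hDeq]
        intro a ha
        rw [mem_insert] at ha
        rcases ha with rfl | haS
        · exact hC0sub hxC0
        · exact mem_union_left _ (mem_of_mem_inter_left haS)
      · exact hR
    have hle : C.card ≤ ((A.1 ∪ B.1).powersetCard k).card := by
      apply Finset.card_le_card_of_injOn (fun D => D.1)
      · intro D hD
        exact mem_powersetCard.mpr ⟨hallsub D hD, D.2⟩
      · exact fun a _ b _ hab => Subtype.ext hab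
    rw [card_powersetCard, hUcard, Nat.choose_succ_self_right] at hle
    exact le_trans (by omega) (le_max_right _ _)

/-- For `N > 2` and `0 < k < N`, the clique number of the Johnson graph is
`ω(J(N, k)) = max (N - k + 1) (k + 1)`. -/
theorem omega_johnson (N k : ℕ) (hN : 2 < N) (hk : 0 < k) (hkN : k < N) :
    omega (johnson N k) = max (N - k + 1) (k + 1) := by
  unfold omega
  have hub : ∀ n ∈ {n | ∃ C : Finset {S : Finset (Fin N) // S.card = k},
      (johnson N k).IsNClique n C}, n ≤ max (N - k + 1) (k + 1) := by
    rintro n ⟨C, hC⟩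
    exact clique_le N k n hk hkN C hC
  have hmem : max (N - k + 1) (k + 1) ∈ {n | ∃ C : Finset {S : Finset (Fin N) // S.card = k},
      (johnson N k).IsNClique n C} := by
    rcases le_total (N - k + 1) (k + 1) with hle | hle
    · rw [max_eq_right hle]; exact cliqueB N k hk hkN
    · rw [max_eq_left hle]; exact cliqueA N k hk hkN
  exact le_antisymm (csSup_le ⟨_, hmem⟩ hub) (le_csSup ⟨_, hub⟩ hmem)
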